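/- arXiv:2007.01494 — 2 statements merged into one kernel-verified Lean document; each statement's English description precedes it below -/
import Mathlib

section
/- Let x_1, ..., x_N be vectors in R^D with sum zero, and let I be a subset of {1,...,N} of cardinality b drawn uniformly at random without replacement. Then E[‖(1/b) Σ_{i∈I} x_i‖²] ≤ (1/(Nb)) · ((N-b)/(N-1)) · Σ_{i=1}^N ‖x_i‖². -/
open Finset

private lemma count_subsets {α : Type*} [Fintype α] [DecidableEq α] (b : ℕ) (s : Finset α)
    (hs : s.card ≤ b) :
    ((Finset.univ.powersetCard b).filter (fun I => s ⊆ I)).card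
      = (Fintype.card α - s.card).choose (b - s.card) := by
  rw [← Finset.card_univ, ← Finset.card_sdiff_of_subset (Finset.subset_univ s),
    ← Finset.card_powersetCard (b - s.card) (Finset.univ \ s)]
  apply Finset.card_bij' (fun I _ => I \ s) (fun J _ => J ∪ s)
  · intro I hI
    simp only [mem_filter, mem_powersetCard] at hI
    simp only [mem_powersetCard]
    exact ⟨Finset.sdiff_subset_sdiff (Finset.subset_univ I) le_rfl,
      by rw [Finset.card_sdiff_of_subset hI.2, hI.1.2]⟩
  · intro J hJ
    simp only [mem_powersetCard, Finset.subset_sdiff] at hJ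
    simp only [mem_filter, mem_powersetCard]
    refine ⟨⟨Finset.subset_univ _, ?_⟩, Finset.subset_union_right⟩
    rw [Finset.card_union_of_disjoint hJ.1.2, hJ.2, Nat.sub_add_cancel hs]
  · intro I hI
    simp only [mem_filter] at hI
    exact Finset.sdiff_union_of_subset hI.2
  · intro J hJ
    simp only [mem_powersetCard, Finset.subset_sdiff] at hJ
    exact Finset.union_sdiff_cancel_right hJ.1.2

private lemma sum_swap_count {α : Type*} [Fintype α] [DecidableEq α] (P : Finset (Finset α))
    (g : α → α → ℝ) :
    ∑ I ∈ P, ∑ i ∈ I, ∑ j ∈ I, g i j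
      = ∑ i, ∑ j, ((P.filter fun I => i ∈ I ∧ j ∈ I).card : ℝ) * g i j := by
  have h1 : ∀ I : Finset α, ∑ i ∈ I, ∑ j ∈ I, g i j
      = ∑ i, ∑ j, if i ∈ I ∧ j ∈ I then g i j else 0 := by
    intro I
    rw [eq_comm]
    refine Eq.trans (Finset.sum_congr rfl fun x _ => ?_)
      (by rw [Finset.sum_ite_mem, Finset.univ_inter] :
        ∑ x : α, (if x ∈ I then ∑ y ∈ I, g x y else 0) = _)
    by_cases hx : x ∈ I <;> simp [hx, Finset.sum_ite_mem, Finset.univ_inter]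
  rw [Finset.sum_congr rfl fun I _ => h1 I, Finset.sum_comm]
  refine Finset.sum_congr rfl fun i _ => ?_
  rw [Finset.sum_comm]
  refine Finset.sum_congr rfl fun j _ => ?_
  rw [← Finset.sum_filter, Finset.sum_const, nsmul_eq_mul]

private lemma choose_mul_id {n k : ℕ} (hk : 1 ≤ k) (hn : 1 ≤ n) :
    k * n.choose k = n * (n - 1).choose (k - 1) := by
  obtain ⟨n', rfl⟩ := Nat.exists_eq_add_of_le hn
  obtain ⟨k', rfl⟩ := Nat.exists_eq_add_of_le hk
  simp only [add_comm 1, Nat.add_sub_cancel]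
  rw [mul_comm (k' + 1), ← Nat.add_one_mul_choose_eq]

/-- Variance bound for sampling without replacement: if `x 1, ..., x N` are vectors in `ℝ^D`
summing to zero and `I` is a uniformly random subset of `{1,...,N}` of cardinality `b`, then
`E ‖(1/b) ∑_{i ∈ I} x i‖² ≤ (1/(N b)) ((N-b)/(N-1)) ∑ i ‖x i‖²`. -/
theorem without_replacement_variance_bound (N D b : ℕ) (hb : 0 < b) (hbN : b ≤ N) (hN : 2 ≤ N)
    (x : Fin N → EuclideanSpace ℝ (Fin D)) (hsum : ∑ i, x i = 0) :
    (1 / ((Finset.univ.powersetCard b : Finset (Finset (Fin N))).card : ℝ)) *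
        ∑ I ∈ (Finset.univ.powersetCard b : Finset (Finset (Fin N))),
          ‖(1 / (b : ℝ)) • ∑ i ∈ I, x i‖ ^ 2
      ≤ (1 / ((N : ℝ) * b)) * (((N : ℝ) - b) / ((N : ℝ) - 1)) * ∑ i, ‖x i‖ ^ 2 := by
  classical
  set P : Finset (Finset (Fin N)) := Finset.univ.powersetCard b with hP
  set C : ℕ := N.choose b with hCdef
  set c1 : ℕ := (N - 1).choose (b - 1) with hc1def
  set c2 : ℕ := if b ≤ 1 then 0 else (N - 2).choose (b - 2) with hc2def
  set S : ℝ := ∑ i, ‖x i‖ ^ 2 with hSdef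
  have hPcard : P.card = C := by rw [hP, Finset.card_powersetCard, Finset.card_univ,
    Fintype.card_fin]
  have hg : ∀ i : Fin N, (inner ℝ (x i) (x i) : ℝ) = ‖x i‖ ^ 2 := fun i =>
    real_inner_self_eq_norm_sq (x i)
  -- counting: diagonal
  have hdiag : ∀ i : Fin N, (P.filter fun I => i ∈ I ∧ i ∈ I).card = c1 := by
    intro i
    have h := count_subsets b ({i} : Finset (Fin N)) (by simp; omega)
    simp only [Finset.card_singleton, Fintype.card_fin] at h
    rw [hP, hc1def, ← h]
    congr 1
    apply Finset.filter_congr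
    intro I _
    simp [Finset.singleton_subset_iff]
  -- counting: off-diagonal
  have hoff : ∀ i j : Fin N, i ≠ j → (P.filter fun I => i ∈ I ∧ j ∈ I).card = c2 := by
    intro i j hij
    by_cases hb1 : b ≤ 1
    · rw [hc2def, if_pos hb1, Finset.card_eq_zero, Finset.filter_eq_empty_iff]
      intro I hI
      rw [hP, Finset.mem_powersetCard] at hI
      rintro ⟨hi, hj⟩
      have hsub : ({i, j} : Finset (Fin N)) ⊆ I := by
        simp [Finset.insert_subset_iff, hi, hj]
      have h2 : 2 ≤ I.card := by
        calc 2 = ({i, j} : Finset (Fin N)).card := (Finset.card_pair hij).symm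
        _ ≤ I.card := Finset.card_le_card hsub
      omega
    · have hcard : ({i, j} : Finset (Fin N)).card = 2 := Finset.card_pair hij
      have h := count_subsets b ({i, j} : Finset (Fin N)) (by omega)
      simp only [hcard, Fintype.card_fin] at h
      rw [hP, hc2def, if_neg hb1, ← h]
      congr 1
      apply Finset.filter_congr
      intro I _
      simp [Finset.insert_subset_iff]
  -- rows sum to -‖x i‖²
  have hrow : ∀ i : Fin N, ∑ j ∈ Finset.univ.erase i, (inner ℝ (x i) (x j) : ℝ) = -‖x i‖ ^ 2 := by
    intro i
    have h0 : ∑ j, (inner ℝ (x i) (x j) : ℝ) = 0 := by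
      rw [← inner_sum, hsum, inner_zero_right]
    have h2 : (inner ℝ (x i) (x i) : ℝ) + ∑ j ∈ Finset.univ.erase i, (inner ℝ (x i) (x j) : ℝ)
        = ∑ j, (inner ℝ (x i) (x j) : ℝ) :=
      Finset.add_sum_erase Finset.univ (fun j => (inner ℝ (x i) (x j) : ℝ)) (Finset.mem_univ i)
    have h3 := hg i
    linarith
  -- key identity
  have key : ∑ I ∈ P, ∑ i ∈ I, ∑ j ∈ I, (inner ℝ (x i) (x j) : ℝ) = ((c1 : ℝ) - c2) * S := by
    rw [sum_swap_count]
    have hinner : ∀ i : Fin N,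
        ∑ j, ((P.filter fun I => i ∈ I ∧ j ∈ I).card : ℝ) * (inner ℝ (x i) (x j) : ℝ)
          = (c1 : ℝ) * ‖x i‖ ^ 2 - (c2 : ℝ) * ‖x i‖ ^ 2 := by
      intro i
      rw [← Finset.add_sum_erase Finset.univ _ (Finset.mem_univ i), hdiag i, hg i]
      have h4 : ∑ j ∈ Finset.univ.erase i,
          ((P.filter fun I => i ∈ I ∧ j ∈ I).card : ℝ) * (inner ℝ (x i) (x j) : ℝ)
          = (c2 : ℝ) * ∑ j ∈ Finset.univ.erase i, (inner ℝ (x i) (x j) : ℝ) := by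
        rw [Finset.mul_sum]
        refine Finset.sum_congr rfl fun j hj => ?_
        rw [hoff i j (Ne.symm (Finset.ne_of_mem_erase hj))]
      rw [h4, hrow i]
      ring
    rw [Finset.sum_congr rfl fun i _ => hinner i, hSdef, Finset.sum_sub_distrib,
      ← Finset.mul_sum, ← Finset.mul_sum]
    ring
  -- cast identities
  have hC0 : 0 < C := Nat.choose_pos hbN
  have hA : (C : ℝ) * b = (N : ℝ) * c1 := by
    have h := choose_mul_id hb (show 1 ≤ N by omega)
    have h' : (b : ℝ) * C = (N : ℝ) * c1 := by rw [hCdef, hc1def]; exact_mod_cast h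
    linarith
  have hB : (c2 : ℝ) * ((N : ℝ) * ((N : ℝ) - 1)) = (C : ℝ) * b * ((b : ℝ) - 1) := by
    by_cases hb1 : b ≤ 1
    · have hb1' : b = 1 := le_antisymm hb1 hb
      rw [hc2def, if_pos hb1, hb1']
      norm_num
    · have h1 := choose_mul_id (show 1 ≤ b - 1 by omega) (show 1 ≤ N - 1 by omega)
      rw [show N - 1 - 1 = N - 2 by omega, show b - 1 - 1 = b - 2 by omega] at h1
      have h1' : ((b : ℝ) - 1) * c1 = ((N : ℝ) - 1) * (((N - 2).choose (b - 2) : ℕ) : ℝ) := by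
        have h2 : (((b - 1) * (N - 1).choose (b - 1) : ℕ) : ℝ)
            = (((N - 1) * (N - 2).choose (b - 2) : ℕ) : ℝ) := by exact_mod_cast h1
        push_cast [Nat.cast_sub hb, Nat.cast_sub (show 1 ≤ N by omega)] at h2
        rw [hc1def]
        linarith
      rw [hc2def, if_neg hb1]
      linear_combination (1 - (b : ℝ)) * hA - (N : ℝ) * h1'
  -- rewrite LHS
  have hLHS : ∑ I ∈ P, ‖(1 / (b : ℝ)) • ∑ i ∈ I, x i‖ ^ 2
      = (1 / (b : ℝ)) ^ 2 * (((c1 : ℝ) - c2) * S) := by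
    rw [← key, Finset.mul_sum]
    refine Finset.sum_congr rfl fun I _ => ?_
    rw [norm_smul, mul_pow, ← real_inner_self_eq_norm_sq (∑ i ∈ I, x i), sum_inner]
    simp only [inner_sum, Real.norm_eq_abs, sq_abs]
  rw [hPcard, hLHS]
  apply le_of_eq
  have hbR : (b : ℝ) ≠ 0 := Nat.cast_ne_zero.2 (by omega)
  have hNR : (N : ℝ) ≠ 0 := Nat.cast_ne_zero.2 (by omega)
  have hN1R : (N : ℝ) - 1 ≠ 0 := by
    have : (2 : ℝ) ≤ N := by exact_mod_cast hN
    linarith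
  have hCR : (C : ℝ) ≠ 0 := Nat.cast_ne_zero.2 (by omega)
  have e1 : (c1 : ℝ) = (C : ℝ) * b / N := by
    rw [eq_div_iff hNR]; linarith
  have e2 : (c2 : ℝ) = (C : ℝ) * b * ((b : ℝ) - 1) / ((N : ℝ) * ((N : ℝ) - 1)) := by
    rw [eq_div_iff (mul_ne_zero hNR hN1R)]; linarith
  rw [e1, e2]
  field_simp
  ring
end

section
/- Let f : R^n → R be L-smooth with f bounded below by f*, let G > 0 bound the stochastic gradient norms, and consider SGD with constant step size η = sqrt(2Δ/(L G² T)) where Δ = f(x_0) - f*. If at each step E[g_t | x_t] = ∇f(x_t) and ‖g_t‖ ≤ G almost surely, then (1/T) Σ_{t=0}^{T-1} E‖∇f(x_t)‖² ≤ sqrt(2 L G² Δ / T). -/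
open MeasureTheory
open scoped RealInnerProductSpace

lemma descent_lemma {E : Type*} [NormedAddCommGroup E] [InnerProductSpace ℝ E] [CompleteSpace E]
    (f : E → ℝ) (gradf : E → E) (L : ℝ) (hL : 0 ≤ L)
    (hgrad : ∀ x, HasGradientAt f (gradf x) x)
    (hlip : ∀ x y, ‖gradf x - gradf y‖ ≤ L * ‖x - y‖) (x y : E) :
    f y ≤ f x + ⟪gradf x, y - x⟫ + L / 2 * ‖y - x‖ ^ 2 := by
  set d := y - x with hd
  have hcont : Continuous gradf := by
    have : LipschitzWith (Real.toNNReal L) gradf := by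
      apply LipschitzWith.of_dist_le_mul
      intro a b
      simpa [dist_eq_norm, Real.coe_toNNReal _ hL] using hlip a b
    exact this.continuous
  have hderiv : ∀ s : ℝ, HasDerivAt (fun s : ℝ => f (x + s • d))
      ⟪gradf (x + s • d), d⟫ s := by
    intro s
    have hc : HasDerivAt (fun s : ℝ => x + s • d) d s := by
      simpa using ((hasDerivAt_id s).smul_const d).const_add x
    have hf : HasFDerivAt f (InnerProductSpace.toDual ℝ E (gradf (x + s • d))) (x + s • d) :=
      (hgrad (x + s • d))
    simpa [InnerProductSpace.toDual_apply_apply, Function.comp_def] using hf.comp_hasDerivAt s hc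
  have hcont' : Continuous fun s : ℝ => ⟪gradf (x + s • d), d⟫ := by
    exact (continuous_inner.comp ((hcont.comp (continuous_const.add
      (continuous_id.smul continuous_const))).prodMk continuous_const))
  have hint : f (x + (1:ℝ) • d) - f (x + (0:ℝ) • d) =
      ∫ s in (0:ℝ)..1, ⟪gradf (x + s • d), d⟫ := by
    rw [intervalIntegral.integral_eq_sub_of_hasDerivAt (fun s _ => hderiv s)
      (hcont'.intervalIntegrable _ _)]
  have key : ∫ s in (0:ℝ)..1, ⟪gradf (x + s • d), d⟫ ≤
      ⟪gradf x, d⟫ + L / 2 * ‖d‖ ^ 2 := by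
    have hle : ∀ s ∈ Set.Icc (0:ℝ) 1,
        ⟪gradf (x + s • d), d⟫ ≤ ⟪gradf x, d⟫ + s * (L * ‖d‖ ^ 2) := by
      intro s hs
      have h1 : ⟪gradf (x + s • d), d⟫ - ⟪gradf x, d⟫
          = ⟪gradf (x + s • d) - gradf x, d⟫ := by
        rw [inner_sub_left]
      have h2 : ⟪gradf (x + s • d) - gradf x, d⟫ ≤ ‖gradf (x + s • d) - gradf x‖ * ‖d‖ :=
        real_inner_le_norm _ _
      have h3 : ‖gradf (x + s • d) - gradf x‖ ≤ L * (s * ‖d‖) := by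
        have := hlip (x + s • d) x
        simpa [norm_smul, abs_of_nonneg hs.1, mul_assoc] using this
      nlinarith [norm_nonneg d, norm_nonneg (gradf (x + s • d) - gradf x), hs.1]
    have hmono := intervalIntegral.integral_mono_on (by norm_num : (0:ℝ) ≤ 1)
      (hcont'.intervalIntegrable _ _)
      (((continuous_const.add (continuous_id.mul continuous_const)).intervalIntegrable 0 1 : IntervalIntegrable _ volume 0 1)) hle
    have : ∫ s in (0:ℝ)..1, (⟪gradf x, d⟫ + s * (L * ‖d‖ ^ 2))
        = ⟪gradf x, d⟫ + L / 2 * ‖d‖ ^ 2 := by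
      rw [intervalIntegral.integral_add (intervalIntegrable_const)
        ((intervalIntegral.intervalIntegrable_id).mul_const _)]
      simp [intervalIntegral.integral_mul_const, integral_id]
      ring
    simp only [Pi.add_apply, Pi.mul_apply, id_eq] at hmono
    linarith [hmono, this.le, this.ge]
  have h0 : x + (0:ℝ) • d = x := by simp
  have h1 : x + (1:ℝ) • d = y := by simp [hd]
  rw [h0, h1] at hint
  linarith [hint, key]


lemma coord_abs_le_norm {n : ℕ} (v : EuclideanSpace ℝ (Fin n)) (i : Fin n) :
    |v i| ≤ ‖v‖ := by
  calc |v i| = Real.sqrt (‖v i‖ ^ 2) := by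
        rw [Real.norm_eq_abs, Real.sqrt_sq_eq_abs, abs_abs]
  _ ≤ Real.sqrt (∑ j, ‖v j‖ ^ 2) := Real.sqrt_le_sqrt
        (Finset.single_le_sum (f := fun j => ‖v j‖ ^ 2) (fun j _ => by positivity)
          (Finset.mem_univ i))
  _ = ‖v‖ := (EuclideanSpace.norm_eq v).symm

lemma tower_inner {Ω : Type*} (m : MeasurableSpace Ω) [m0 : MeasurableSpace Ω]
    (μ : Measure Ω) [IsProbabilityMeasure μ]
    {n : ℕ} (g h : Ω → EuclideanSpace ℝ (Fin n))
    (hcond : μ[g | m] =ᵐ[μ] h) (B G : ℝ) (hB0 : 0 ≤ B) (hG0 : 0 ≤ G)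
    (hhB : ∀ ω, ‖h ω‖ ≤ B) (hgG : ∀ ω, ‖g ω‖ ≤ G) :
    Integrable (fun ω => ⟪h ω, g ω⟫) μ ∧
      ∫ ω, ⟪h ω, g ω⟫ ∂μ = ∫ ω, ‖h ω‖ ^ 2 ∂μ := by
  by_cases hm : m ≤ m0
  swap
  · have hz : h =ᵐ[μ] 0 := by
      refine hcond.symm.trans ?_
      rw [condExp_of_not_le hm]
    have h1 : (fun ω => ⟪h ω, g ω⟫) =ᵐ[μ] 0 := by
      filter_upwards [hz] with ω hω; simp [hω]
    have h2 : (fun ω => ‖h ω‖ ^ 2) =ᵐ[μ] 0 := by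
      filter_upwards [hz] with ω hω; simp [hω]
    exact ⟨(integrable_zero _ _ _).congr h1.symm,
      by rw [integral_congr_ae h1, integral_congr_ae h2]⟩
  by_cases hgi : Integrable g μ
  swap
  · have hz : h =ᵐ[μ] 0 := by
      refine hcond.symm.trans ?_
      rw [condExp_of_not_integrable hgi]
    have h1 : (fun ω => ⟪h ω, g ω⟫) =ᵐ[μ] 0 := by
      filter_upwards [hz] with ω hω; simp [hω]
    have h2 : (fun ω => ‖h ω‖ ^ 2) =ᵐ[μ] 0 := by
      filter_upwards [hz] with ω hω; simp [hω]
    exact ⟨(integrable_zero _ _ _).congr h1.symm,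
      by rw [integral_congr_ae h1, integral_congr_ae h2]⟩
  haveI : IsFiniteMeasure (μ.trim hm) := isFiniteMeasure_trim hm
  set h' : Ω → EuclideanSpace ℝ (Fin n) := μ[g | m] with hh'
  have hh'h : h' =ᵐ[μ] h := hcond
  have hh'sm : StronglyMeasurable[m] h' := stronglyMeasurable_condExp
  have hh'B : ∀ᵐ ω ∂μ, ‖h' ω‖ ≤ B := by
    filter_upwards [hh'h] with ω hω; rw [hω]; exact hhB ω
  -- coordinates
  have claimA : ∀ i : Fin n, μ[(fun ω => g ω i) | m] =ᵐ[μ] fun ω => h' ω i := by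
    intro i
    have hgii : Integrable (fun ω => g ω i) μ :=
      ((EuclideanSpace.proj i : EuclideanSpace ℝ (Fin n) →L[ℝ] ℝ)).integrable_comp hgi
    have hh'i_int : Integrable (fun ω => h' ω i) μ :=
      ((EuclideanSpace.proj i : EuclideanSpace ℝ (Fin n) →L[ℝ] ℝ)).integrable_comp
        integrable_condExp
    refine (ae_eq_condExp_of_forall_setIntegral_eq hm hgii
      (fun s _ _ => hh'i_int.integrableOn) (fun s hs hμs => ?_) ?_).symm
    · have e1 : ∫ ω in s, h' ω i ∂μ =
          (EuclideanSpace.proj i : EuclideanSpace ℝ (Fin n) →L[ℝ] ℝ) (∫ ω in s, h' ω ∂μ) :=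
        ((EuclideanSpace.proj i : EuclideanSpace ℝ (Fin n) →L[ℝ] ℝ)).integral_comp_comm
          integrable_condExp.integrableOn
      have e2 : ∫ ω in s, g ω i ∂μ =
          (EuclideanSpace.proj i : EuclideanSpace ℝ (Fin n) →L[ℝ] ℝ) (∫ ω in s, g ω ∂μ) :=
        ((EuclideanSpace.proj i : EuclideanSpace ℝ (Fin n) →L[ℝ] ℝ)).integral_comp_comm
          hgi.integrableOn
      rw [e1, e2, setIntegral_condExp hm hgi hs]
    · exact StronglyMeasurable.aestronglyMeasurable
        (((EuclideanSpace.proj i : EuclideanSpace ℝ (Fin n) →L[ℝ] ℝ)).continuous.comp_stronglyMeasurable hh'sm)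
  have hh'i_sm : ∀ i : Fin n, StronglyMeasurable[m] fun ω => h' ω i := fun i =>
    ((EuclideanSpace.proj i : EuclideanSpace ℝ (Fin n) →L[ℝ] ℝ)).continuous.comp_stronglyMeasurable hh'sm
  have habs : ∀ (i : Fin n) ω, |h' ω i| ≤ ‖h' ω‖ := fun i ω => coord_abs_le_norm (h' ω) i
  have hgabs : ∀ (i : Fin n) ω, |g ω i| ≤ G := fun i ω => (coord_abs_le_norm (g ω) i).trans (hgG ω)
  have hgii : ∀ i : Fin n, Integrable (fun ω => g ω i) μ := fun i =>
    ((EuclideanSpace.proj i : EuclideanSpace ℝ (Fin n) →L[ℝ] ℝ)).integrable_comp hgi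
  have hh'i_aesm : ∀ i : Fin n, AEStronglyMeasurable (fun ω => h' ω i) μ := fun i =>
    ((hh'i_sm i).mono hm).aestronglyMeasurable
  have hprod_int : ∀ i : Fin n, Integrable (fun ω => h' ω i * g ω i) μ := by
    intro i
    refine Integrable.mono' (integrable_const (B * G)) ((hh'i_aesm i).mul (hgii i).1) ?_
    filter_upwards [hh'B] with ω hBω
    rw [Real.norm_eq_abs, abs_mul]
    exact mul_le_mul ((habs i ω).trans hBω) (hgabs i ω) (abs_nonneg _) hB0
  have hsq_int : ∀ i : Fin n, Integrable (fun ω => h' ω i * h' ω i) μ := by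
    intro i
    refine Integrable.mono' (integrable_const (B * B)) ((hh'i_aesm i).mul (hh'i_aesm i)) ?_
    filter_upwards [hh'B] with ω hBω
    rw [Real.norm_eq_abs, abs_mul]
    exact mul_le_mul ((habs i ω).trans hBω) ((habs i ω).trans hBω) (abs_nonneg _) hB0
  have stepB : ∀ i : Fin n, ∫ ω, h' ω i * g ω i ∂μ = ∫ ω, h' ω i * h' ω i ∂μ := by
    intro i
    have hmul := condExp_mul_of_stronglyMeasurable_left (hh'i_sm i) (hprod_int i) (hgii i)
    calc ∫ ω, h' ω i * g ω i ∂μ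
        = ∫ ω, (μ[(fun ω => h' ω i * g ω i)|m]) ω ∂μ := (integral_condExp hm).symm
      _ = ∫ ω, h' ω i * (μ[(fun ω => g ω i)|m]) ω ∂μ := by
          refine integral_congr_ae ?_
          filter_upwards [hmul] with ω hω
          exact hω
      _ = ∫ ω, h' ω i * h' ω i ∂μ := by
          refine integral_congr_ae ?_
          filter_upwards [claimA i] with ω hω
          rw [hω]
  have inner_eq : ∀ (u v : EuclideanSpace ℝ (Fin n)), ⟪u, v⟫ = ∑ i, u i * v i := by
    intro u v
    simp [PiLp.inner_apply, RCLike.inner_apply, conj_trivial]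
    exact Finset.sum_congr rfl fun i _ => mul_comm _ _
  have hae1 : (fun ω => ⟪h ω, g ω⟫) =ᵐ[μ] fun ω => ∑ i, h' ω i * g ω i := by
    filter_upwards [hh'h] with ω hω
    rw [← hω, inner_eq]
  have hinteg : Integrable (fun ω => ⟪h ω, g ω⟫) μ :=
    (integrable_finset_sum _ (fun i _ => hprod_int i)).congr hae1.symm
  have exp1 : ∫ ω, ⟪h ω, g ω⟫ ∂μ = ∑ i, ∫ ω, h' ω i * g ω i ∂μ := by
    rw [integral_congr_ae hae1]
    exact integral_finset_sum _ (fun i _ => hprod_int i)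
  have exp2 : ∫ ω, ‖h ω‖ ^ 2 ∂μ = ∑ i, ∫ ω, h' ω i * h' ω i ∂μ := by
    rw [integral_congr_ae (show (fun ω => ‖h ω‖ ^ 2) =ᵐ[μ]
        fun ω => ∑ i, h' ω i * h' ω i by
      filter_upwards [hh'h] with ω hω
      rw [← hω, ← real_inner_self_eq_norm_sq, inner_eq])]
    exact integral_finset_sum _ (fun i _ => hsq_int i)
  refine ⟨hinteg, ?_⟩
  rw [exp1, exp2]
  exact Finset.sum_congr rfl fun i _ => stepB i

/-- SGD bound: for an `L`-smooth function bounded below by `f*`, with unbiased stochastic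
gradients of norm at most `G` and constant step size `η = √(2Δ/(LG²T))` where
`Δ = f(x₀) - f*`, one has `(1/T) ∑_{t<T} E‖∇f(x_t)‖² ≤ √(2LG²Δ/T)`. -/
theorem sgd_convergence_bound (n : ℕ)
    {Ω : Type*} [MeasurableSpace Ω] (μ : Measure Ω) [IsProbabilityMeasure μ]
    (f : EuclideanSpace ℝ (Fin n) → ℝ)
    (gradf : EuclideanSpace ℝ (Fin n) → EuclideanSpace ℝ (Fin n))
    (L G Δ fstar η : ℝ) (T : ℕ) (hT : 0 < T) (hL : 0 < L) (hG : 0 < G)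
    (hgrad : ∀ x, HasGradientAt f (gradf x) x)
    (hlip : ∀ x y, ‖gradf x - gradf y‖ ≤ L * ‖x - y‖)
    (hbelow : ∀ x, fstar ≤ f x)
    (x g : ℕ → Ω → EuclideanSpace ℝ (Fin n))
    (x₀ : EuclideanSpace ℝ (Fin n)) (hx₀ : ∀ ω, x 0 ω = x₀)
    (hΔ : Δ = f x₀ - fstar) (hΔpos : 0 < Δ)
    (hη : η = Real.sqrt (2 * Δ / (L * G ^ 2 * T)))
    (hupdate : ∀ t ω, x (t + 1) ω = x t ω - η • g t ω)
    (hunbiased : ∀ t,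
      μ[g t | MeasurableSpace.comap (x t)
          (inferInstance : MeasurableSpace (EuclideanSpace ℝ (Fin n)))]
        =ᵐ[μ] fun ω => gradf (x t ω))
    (hbound : ∀ t ω, ‖g t ω‖ ≤ G) :
    (1 / (T : ℝ)) * ∑ t ∈ Finset.range T, ∫ ω, ‖gradf (x t ω)‖ ^ 2 ∂μ ≤
      Real.sqrt (2 * L * G ^ 2 * Δ / T) := by
  have hTpos : (0:ℝ) < T := by exact_mod_cast hT
  have hηsq : η ^ 2 = 2 * Δ / (L * G ^ 2 * T) := by
    rw [hη, Real.sq_sqrt]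
    positivity
  have hηpos : 0 < η := by
    rw [hη]
    apply Real.sqrt_pos.mpr
    positivity
  -- bound on iterates
  have hxb : ∀ t ω, ‖x t ω - x₀‖ ≤ t * (η * G) := by
    intro t
    induction t with
    | zero => intro ω; simp [hx₀]
    | succ t ih =>
      intro ω
      have : x (t+1) ω - x₀ = (x t ω - x₀) - η • g t ω := by
        rw [hupdate t ω]; abel
      calc ‖x (t+1) ω - x₀‖ = ‖(x t ω - x₀) - η • g t ω‖ := by rw [this]
        _ ≤ ‖x t ω - x₀‖ + ‖η • g t ω‖ := norm_sub_le _ _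
        _ ≤ t * (η * G) + η * G := by
            refine add_le_add (ih ω) ?_
            rw [norm_smul, Real.norm_eq_abs, abs_of_pos hηpos]
            exact mul_le_mul_of_nonneg_left (hbound t ω) hηpos.le
        _ = (t+1 : ℕ) * (η * G) := by push_cast; ring
  set B : ℝ := ‖gradf x₀‖ + L * (T * (η * G)) with hB
  have hB0 : 0 ≤ B := by positivity
  have hgradb : ∀ t, t ≤ T → ∀ ω, ‖gradf (x t ω)‖ ≤ B := by
    intro t ht ω
    calc ‖gradf (x t ω)‖ = ‖gradf x₀ + (gradf (x t ω) - gradf x₀)‖ := by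
          congr 1
          abel
      _ ≤ ‖gradf x₀‖ + ‖gradf (x t ω) - gradf x₀‖ := norm_add_le _ _
      _ ≤ ‖gradf x₀‖ + L * ‖x t ω - x₀‖ := by
          exact add_le_add le_rfl (hlip _ _)
      _ ≤ B := by
          rw [hB]
          refine add_le_add le_rfl (mul_le_mul_of_nonneg_left ((hxb t ω).trans ?_) hL.le)
          have : (t:ℝ) ≤ T := by exact_mod_cast ht
          nlinarith [mul_pos hηpos hG]
  -- pathwise telescoping
  have htel : ∀ ω, η * ∑ t ∈ Finset.range T, ⟪gradf (x t ω), g t ω⟫ ≤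
      Δ + L * η ^ 2 / 2 * (T * G ^ 2) := by
    intro ω
    have key : ∀ N : ℕ, f (x N ω) + η * ∑ t ∈ Finset.range N, ⟪gradf (x t ω), g t ω⟫ ≤
        f x₀ + L * η ^ 2 / 2 * ∑ t ∈ Finset.range N, ‖g t ω‖ ^ 2 := by
      intro N
      induction N with
      | zero => simp [hx₀]
      | succ N ih =>
        have hdes := descent_lemma f gradf L hL.le hgrad hlip (x N ω) (x (N+1) ω)
        have hdiff : x (N+1) ω - x N ω = -(η • g N ω) := by
          rw [hupdate N ω]; abel
        rw [hdiff] at hdes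
        have h1 : ⟪gradf (x N ω), -(η • g N ω)⟫ = -(η * ⟪gradf (x N ω), g N ω⟫) := by
          rw [inner_neg_right, real_inner_smul_right]
        have h2 : ‖-(η • g N ω)‖ ^ 2 = η ^ 2 * ‖g N ω‖ ^ 2 := by
          rw [norm_neg, norm_smul, Real.norm_eq_abs, mul_pow, sq_abs]
        rw [h1, h2] at hdes
        rw [Finset.sum_range_succ, Finset.sum_range_succ]
        nlinarith [ih, hdes]
    have hN := key T
    have hfT : fstar ≤ f (x T ω) := hbelow _
    have hgsum : ∑ t ∈ Finset.range T, ‖g t ω‖ ^ 2 ≤ T * G ^ 2 := by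
      have h1 : ∀ t ∈ Finset.range T, ‖g t ω‖ ^ 2 ≤ G ^ 2 := by
        intro t _
        nlinarith [hbound t ω, norm_nonneg (g t ω)]
      calc ∑ t ∈ Finset.range T, ‖g t ω‖ ^ 2 ≤ ∑ _t ∈ Finset.range T, G ^ 2 :=
            Finset.sum_le_sum h1
        _ = T * G ^ 2 := by
            rw [Finset.sum_const, Finset.card_range, nsmul_eq_mul]
    have hLη : 0 ≤ L * η ^ 2 / 2 := by positivity
    linarith [hN, hfT, mul_le_mul_of_nonneg_left hgsum hLη]
  -- integrate
  have hint : ∀ t ∈ Finset.range T,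
      Integrable (fun ω => ⟪gradf (x t ω), g t ω⟫) μ ∧
      ∫ ω, ⟪gradf (x t ω), g t ω⟫ ∂μ = ∫ ω, ‖gradf (x t ω)‖ ^ 2 ∂μ := by
    intro t ht
    exact tower_inner (MeasurableSpace.comap (x t) inferInstance) μ (g t)
      (fun ω => gradf (x t ω)) (hunbiased t) B G hB0 hG.le
      (hgradb t (Finset.mem_range.mp ht).le) (hbound t)
  have hSint : Integrable (fun ω => ∑ t ∈ Finset.range T, ⟪gradf (x t ω), g t ω⟫) μ :=
    integrable_finset_sum _ fun t ht => (hint t ht).1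
  have hSle : ∫ ω, ∑ t ∈ Finset.range T, ⟪gradf (x t ω), g t ω⟫ ∂μ ≤
      (Δ + L * η ^ 2 / 2 * (T * G ^ 2)) / η := by
    have hle : ∀ ω, ∑ t ∈ Finset.range T, ⟪gradf (x t ω), g t ω⟫ ≤
        (Δ + L * η ^ 2 / 2 * (T * G ^ 2)) / η := by
      intro ω
      rw [le_div_iff₀ hηpos]
      calc (∑ t ∈ Finset.range T, ⟪gradf (x t ω), g t ω⟫) * η
          = η * ∑ t ∈ Finset.range T, ⟪gradf (x t ω), g t ω⟫ := mul_comm _ _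
        _ ≤ _ := htel ω
    calc ∫ ω, ∑ t ∈ Finset.range T, ⟪gradf (x t ω), g t ω⟫ ∂μ
        ≤ ∫ _ω, (Δ + L * η ^ 2 / 2 * (T * G ^ 2)) / η ∂μ :=
          integral_mono hSint (integrable_const _) hle
      _ = (Δ + L * η ^ 2 / 2 * (T * G ^ 2)) / η := by simp
  have hsum_eq : ∑ t ∈ Finset.range T, ∫ ω, ‖gradf (x t ω)‖ ^ 2 ∂μ =
      ∫ ω, ∑ t ∈ Finset.range T, ⟪gradf (x t ω), g t ω⟫ ∂μ := by
    rw [integral_finset_sum _ fun t ht => (hint t ht).1]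
    exact (Finset.sum_congr rfl fun t ht => ((hint t ht).2).symm)
  -- arithmetic
  have hLη2 : L * η ^ 2 / 2 * (T * G ^ 2) = Δ := by
    rw [hηsq]
    field_simp
  have hfinal : (1 / (T : ℝ)) * ∑ t ∈ Finset.range T, ∫ ω, ‖gradf (x t ω)‖ ^ 2 ∂μ ≤
      2 * Δ / (η * T) := by
    rw [hsum_eq]
    rw [one_div, inv_mul_le_iff₀ hTpos]
    calc ∫ ω, ∑ t ∈ Finset.range T, ⟪gradf (x t ω), g t ω⟫ ∂μ
        ≤ (Δ + L * η ^ 2 / 2 * (T * G ^ 2)) / η := hSle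
      _ = 2 * Δ / η := by rw [hLη2]; ring_nf
      _ = (T:ℝ) * (2 * Δ / (η * T)) := by field_simp
  refine hfinal.trans (le_of_eq ?_)
  have hrhs : 2 * Δ / (η * T) = Real.sqrt ((2 * Δ / (η * T)) ^ 2) := by
    rw [Real.sqrt_sq (by positivity)]
  rw [hrhs]
  congr 1
  rw [show ((2 * Δ / (η * (T:ℝ))) ^ 2 : ℝ) = 4 * Δ ^ 2 / (η ^ 2 * (T:ℝ) ^ 2) from by ring,
    hηsq]
  field_simp
  ring
end
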